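/- Suppose the transition density q satisfies 0 < q_min ≤ q(0,x;T,z) ≤ q_max on S₀ × S_T with S₀ and S_T of finite positive Lebesgue measure, and g* : S_T → (0,∞) satisfies the Schrödinger fixed-point equation g*(z) = ∫_{S₀} ρ₀(x) q(0,x;T,z) / (∫_{S_T} q(0,x;T,z') ρ_T(z')/g*(z') dz') dx with ρ₀ a probability density on S₀, and the normalization ∫_{S_T} g*(z) dz = 1. Then q_min/Q_max ≤ g*(z) ≤ q_max/Q_min for all z ∈ S_T, where Q_T(x) = ∫_{S_T} q(0,x;T,z) dz and Q_min ≤ Q_T ≤ Q_max on S₀. -/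

import Mathlib

open MeasureTheory

/-- A priori bounds on the normalized Schrödinger fixed point:
if `q_min ≤ q ≤ q_max`, `Q_min ≤ Q_T ≤ Q_max` and `g*` solves the Schrödinger
fixed-point equation with `∫_{S_T} g* = 1`, then
`q_min/Q_max ≤ g* ≤ q_max/Q_min` on `S_T`. -/
theorem stmt6 {n : ℕ} (S0 ST : Set (EuclideanSpace ℝ (Fin n)))
    (hS0c : IsCompact S0) (hSTc : IsCompact ST)
    (hv0 : 0 < volume S0) (hvT : 0 < volume ST)
    (q : EuclideanSpace ℝ (Fin n) → EuclideanSpace ℝ (Fin n) → ℝ)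
    (hqc : Continuous fun p : EuclideanSpace ℝ (Fin n) × EuclideanSpace ℝ (Fin n) => q p.1 p.2)
    (qmin qmax : ℝ) (hqmin : 0 < qmin)
    (hq : ∀ x ∈ S0, ∀ z ∈ ST, qmin ≤ q x z ∧ q x z ≤ qmax)
    (ρ0 ρT : EuclideanSpace ℝ (Fin n) → ℝ)
    (hρ0m : Measurable ρ0) (hρTm : Measurable ρT)
    (hρ0 : ∀ x ∈ S0, 0 ≤ ρ0 x) (hρ0i : ∫ x in S0, ρ0 x = 1)
    (hρT : ∀ z ∈ ST, 0 ≤ ρT z) (hρTi : ∫ z in ST, ρT z = 1)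
    (Qmin Qmax : ℝ) (hQmin : 0 < Qmin)
    (hQ : ∀ x ∈ S0, Qmin ≤ (∫ z in ST, q x z) ∧ (∫ z in ST, q x z) ≤ Qmax)
    (g : EuclideanSpace ℝ (Fin n) → ℝ) (hgm : Measurable g)
    (hgpos : ∀ z ∈ ST, 0 < g z)
    (hD : ∀ x ∈ S0, IntegrableOn (fun z' => q x z' * ρT z' / g z') ST)
    (hν : IntegrableOn (fun x => ρ0 x / (∫ z' in ST, q x z' * ρT z' / g z')) S0)
    (hfix : ∀ z ∈ ST,
      g z = ∫ x in S0, ρ0 x * q x z / (∫ z' in ST, q x z' * ρT z' / g z'))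
    (hnorm : ∫ z in ST, g z = 1) :
    ∀ z ∈ ST, qmin / Qmax ≤ g z ∧ g z ≤ qmax / Qmin := by
  have hS0m : MeasurableSet S0 := hS0c.measurableSet
  have hSTm : MeasurableSet ST := hSTc.measurableSet
  set D : EuclideanSpace ℝ (Fin n) → ℝ :=
    fun x => ∫ z' in ST, q x z' * ρT z' / g z' with hDdef
  set ν : EuclideanSpace ℝ (Fin n) → ℝ := fun x => ρ0 x / D x with hνdef
  have hS0ne : S0.Nonempty := by
    by_contra h
    rw [Set.not_nonempty_iff_eq_empty] at h
    simp [h] at hv0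
  have hqmax : 0 < qmax := by
    obtain ⟨x0, hx0⟩ := hS0ne
    have hSTne : ST.Nonempty := by
      by_contra h
      rw [Set.not_nonempty_iff_eq_empty] at h
      simp [h] at hvT
    obtain ⟨z0, hz0⟩ := hSTne
    exact lt_of_lt_of_le hqmin (le_trans (hq x0 hx0 z0 hz0).1 (hq x0 hx0 z0 hz0).2)
  have hQmax : 0 < Qmax := by
    obtain ⟨x0, hx0⟩ := hS0ne
    exact lt_of_lt_of_le hQmin (le_trans (hQ x0 hx0).1 (hQ x0 hx0).2)
  -- ν ≥ 0 on S0
  have hνnn : ∀ x ∈ S0, 0 ≤ ν x := by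
    intro x hx
    have hDnn : 0 ≤ D x := by
      apply setIntegral_nonneg hSTm
      intro z hz
      exact div_nonneg (mul_nonneg (le_trans hqmin.le (hq x hx z hz).1) (hρT z hz)) (hgpos z hz).le
    exact div_nonneg (hρ0 x hx) hDnn
  set I : ℝ := ∫ x in S0, ν x with hIdef
  have hIint : IntegrableOn ν S0 := hν
  -- finite measures
  haveI hST_fin : IsFiniteMeasure (volume.restrict ST) :=
    ⟨by rw [Measure.restrict_apply_univ]; exact hSTc.measure_lt_top⟩
  haveI hS0_fin : IsFiniteMeasure (volume.restrict S0) :=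
    ⟨by rw [Measure.restrict_apply_univ]; exact hS0c.measure_lt_top⟩
  -- product integrability of F (x,z) = ν x * q x z
  have hFmeas : AEStronglyMeasurable (fun p : _ × _ => ν p.1 * q p.1 p.2)
      ((volume.restrict S0).prod (volume.restrict ST)) := by
    exact (hIint.aestronglyMeasurable.comp_fst).mul
      hqc.aestronglyMeasurable
  have hFbound : ∀ᵐ p ∂((volume.restrict S0).prod (volume.restrict ST)),
      ‖ν p.1 * q p.1 p.2‖ ≤ ν p.1 * qmax := by
    rw [Measure.prod_restrict]
    filter_upwards [ae_restrict_mem (hS0m.prod hSTm)] with p hp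
    obtain ⟨hp1, hp2⟩ := hp
    rw [norm_mul, Real.norm_of_nonneg (hνnn _ hp1)]
    apply mul_le_mul_of_nonneg_left _ (hνnn _ hp1)
    rw [Real.norm_eq_abs, abs_le]
    constructor
    · linarith [(hq _ hp1 _ hp2).1]
    · exact (hq _ hp1 _ hp2).2
  have hFint : Integrable (fun p : _ × _ => ν p.1 * q p.1 p.2)
      ((volume.restrict S0).prod (volume.restrict ST)) := by
    apply Integrable.mono' (g := fun p => ν p.1 * qmax) _ hFmeas hFbound
    exact hIint.mul_prod (integrable_const qmax)
  -- pointwise integrability in x for fixed z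
  have hint_z : ∀ z ∈ ST, IntegrableOn (fun x => ν x * q x z) S0 := by
    intro z hz
    apply Integrable.mono' (g := fun x => ν x * qmax)
      (hIint.mul_const qmax)
      (hIint.aestronglyMeasurable.mul
        (hqc.comp (continuous_id.prodMk continuous_const)).aestronglyMeasurable)
    filter_upwards [ae_restrict_mem hS0m] with x hx
    show ‖ν x * q x z‖ ≤ ν x * qmax
    rw [norm_mul, Real.norm_of_nonneg (hνnn _ hx)]
    apply mul_le_mul_of_nonneg_left _ (hνnn _ hx)
    rw [Real.norm_eq_abs, abs_le]
    constructor
    · linarith [(hq _ hx z hz).1]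
    · exact (hq _ hx z hz).2
  -- rewrite fixed point
  have hfix' : ∀ z ∈ ST, g z = ∫ x in S0, ν x * q x z := by
    intro z hz
    rw [hfix z hz]
    congr 1
    funext x
    rw [hνdef]
    ring
  -- bounds on g in terms of I
  have hglb : ∀ z ∈ ST, qmin * I ≤ g z := by
    intro z hz
    rw [hfix' z hz, hIdef, mul_comm, ← integral_mul_const]
    apply setIntegral_mono_on (hIint.mul_const qmin) (hint_z z hz) hS0m
    intro x hx
    exact mul_le_mul_of_nonneg_left (hq x hx z hz).1 (hνnn x hx)
  have hgub : ∀ z ∈ ST, g z ≤ qmax * I := by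
    intro z hz
    rw [hfix' z hz, hIdef, mul_comm, ← integral_mul_const]
    apply setIntegral_mono_on (hint_z z hz) (hIint.mul_const qmax) hS0m
    intro x hx
    exact mul_le_mul_of_nonneg_left (hq x hx z hz).2 (hνnn x hx)
  -- Fubini: 1 = ∫_S0 ν x * Q_T x
  have hswap : (1 : ℝ) = ∫ x in S0, ν x * (∫ z in ST, q x z) := by
    rw [← hnorm]
    calc ∫ z in ST, g z = ∫ z in ST, ∫ x in S0, ν x * q x z := by
          apply setIntegral_congr_fun hSTm
          intro z hz
          exact hfix' z hz
      _ = ∫ x in S0, ∫ z in ST, ν x * q x z := by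
          exact (integral_integral_swap hFint).symm
      _ = ∫ x in S0, ν x * (∫ z in ST, q x z) := by
          congr 1
          funext x
          rw [integral_const_mul]
  have hQTint : IntegrableOn (fun x => ν x * (∫ z in ST, q x z)) S0 := by
    have := hFint.integral_prod_left
    simpa [integral_const_mul, IntegrableOn] using this
  have h1ub : 1 ≤ Qmax * I := by
    rw [hswap, hIdef, mul_comm, ← integral_mul_const]
    apply setIntegral_mono_on hQTint (hIint.mul_const Qmax) hS0m
    intro x hx
    exact mul_le_mul_of_nonneg_left (hQ x hx).2 (hνnn x hx)
  have h1lb : Qmin * I ≤ 1 := by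
    rw [hswap, hIdef, mul_comm, ← integral_mul_const]
    apply setIntegral_mono_on (hIint.mul_const Qmin) hQTint hS0m
    intro x hx
    exact mul_le_mul_of_nonneg_left (hQ x hx).1 (hνnn x hx)
  have hIlb : 1 / Qmax ≤ I := by
    rw [div_le_iff₀ hQmax] at *
    linarith [h1ub]
  have hIub : I ≤ 1 / Qmin := by
    rw [le_div_iff₀ hQmin]
    linarith [h1lb]
  intro z hz
  constructor
  · calc qmin / Qmax = qmin * (1 / Qmax) := by ring
      _ ≤ qmin * I := mul_le_mul_of_nonneg_left hIlb hqmin.le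
      _ ≤ g z := hglb z hz
  · calc g z ≤ qmax * I := hgub z hz
      _ ≤ qmax * (1 / Qmin) := mul_le_mul_of_nonneg_left hIub hqmax.le
      _ = qmax / Qmin := by ring
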